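/- There exist sets A, B ⊆ ℕ such that B is mod-recursive reducible to A but B is not cofinitely reducible to A. -/

import Mathlib

open Filter

/-- A finite record of oracle query answers: a finite list of (position, bit) pairs. -/
abbrev FinInfo : Type := List (ℕ × Bool)

/-- Two finite query-answer records are compatible if they agree wherever both answer. -/
def FinInfo.Compatible (σ τ : FinInfo) : Prop :=
  ∀ p ∈ σ, ∀ q ∈ τ, p.1 = q.1 → p.2 = q.2

/-- The answers recorded in `σ` are exactly those given by the characteristic
function of the set `C`. -/
def AgreesSet (σ : FinInfo) (C : Set ℕ) : Prop :=
  ∀ p ∈ σ, (p.2 = true ↔ p.1 ∈ C)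

/-- The answers recorded in `σ` are all given by the partial oracle `g`. -/
def AgreesPart (σ : FinInfo) (g : ℕ →. Bool) : Prop :=
  ∀ p ∈ σ, p.2 ∈ g p.1

/-- `g` is a partial oracle for the set `A`: a partial function from `ℕ` to `Bool`
agreeing with the characteristic function of `A` on its domain. -/
def IsPartialOracle (g : ℕ →. Bool) (A : Set ℕ) : Prop :=
  ∀ n b, b ∈ g n → (b = true ↔ n ∈ A)

/-- The domain of a partial oracle. -/
def pDom (g : ℕ →. Bool) : Set ℕ := {n | (g n).Dom}

/-- A Turing functional (oracle Turing machine program), presented as a computable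
enumeration of axioms `(σ, n, b)`, meaning: if the oracle answers the queries
recorded in `σ` as `σ` prescribes, then the machine halts on input `n` with
output `b`.  Oracle queries are made in parallel, so with a partial oracle the
machine halts on `n` iff some axiom for `n` is answered by the partial oracle.
Determinism of the machine is reflected in the requirement that axioms with
compatible query answers give equal outputs. -/
structure TuringFunctional where
  axs : ℕ → Option (FinInfo × ℕ × Bool)
  axs_computable : Computable axs
  consistent : ∀ k₁ k₂ σ₁ σ₂ n b₁ b₂, axs k₁ = some (σ₁, n, b₁) →
    axs k₂ = some (σ₂, n, b₂) → σ₁.Compatible σ₂ → b₁ = b₂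

namespace TuringFunctional

/-- `Φ^C(n)` halts with output `b` (total oracle `C`). -/
def HaltsT (Φ : TuringFunctional) (C : Set ℕ) (n : ℕ) (b : Bool) : Prop :=
  ∃ k σ, Φ.axs k = some (σ, n, b) ∧ AgreesSet σ C

/-- `Φ^g(n)` halts with output `b` (partial oracle `g`). -/
def HaltsP (Φ : TuringFunctional) (g : ℕ →. Bool) (n : ℕ) (b : Bool) : Prop :=
  ∃ k σ, Φ.axs k = some (σ, n, b) ∧ AgreesPart σ g

/-- `Φ^C` is total. -/
def TotalOn (Φ : TuringFunctional) (C : Set ℕ) : Prop := ∀ n, ∃ b, Φ.HaltsT C n b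

/-- The set `{n : Φ^C(n) = B(n)}` on which `Φ^C` halts and agrees with the
characteristic function of `B`. -/
def AgreeSet (Φ : TuringFunctional) (C B : Set ℕ) : Set ℕ :=
  {n | ∃ b, Φ.HaltsT C n b ∧ (b = true ↔ n ∈ B)}

/-- `Φ^A = B`: with oracle `A`, `Φ` is total and computes the characteristic
function of `B`. -/
def FunEq (Φ : TuringFunctional) (A B : Set ℕ) : Prop :=
  Φ.TotalOn A ∧ ∀ n b, Φ.HaltsT A n b → (b = true ↔ n ∈ B)

/-- `Φ^g ≃ B`: every halting output of `Φ` with partial oracle `g` agrees with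
the characteristic function of `B`. -/
def PAgrees (Φ : TuringFunctional) (g : ℕ →. Bool) (B : Set ℕ) : Prop :=
  ∀ n b, Φ.HaltsP g n b → (b = true ↔ n ∈ B)

/-- The domain of `Φ^g`. -/
def PDomain (Φ : TuringFunctional) (g : ℕ →. Bool) : Set ℕ :=
  {n | ∃ b, Φ.HaltsP g n b}

/-- The axiom with index `k` applies to oracle `C` on input `n`. -/
def AppliesAt (Φ : TuringFunctional) (C : Set ℕ) (n k : ℕ) : Prop :=
  ∃ σ b, Φ.axs k = some (σ, n, b) ∧ AgreesSet σ C

/-- The (halting) computation of `Φ^C(n)` queries the oracle bit `C(m)`: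
the first axiom in the enumeration that applies to `C` on input `n`
records an answer to a query at position `m`. -/
def QueriesAt (Φ : TuringFunctional) (C : Set ℕ) (n m : ℕ) : Prop :=
  ∃ k σ b, Φ.axs k = some (σ, n, b) ∧ AgreesSet σ C ∧
    (∀ k' < k, ¬ Φ.AppliesAt C n k') ∧ ∃ p ∈ σ, p.1 = m

end TuringFunctional

/-- `D ⊆ ℕ` has (asymptotic) density 1. -/
def DensityOne (D : Set ℕ) : Prop :=
  Filter.Tendsto (fun n : ℕ => ((D ∩ Set.Iio n).ncard : ℝ) / n) Filter.atTop (nhds 1)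

/-- `B ≤₁ A`: 1-reducibility. -/
def OneRed (B A : Set ℕ) : Prop :=
  ∃ f : ℕ → ℕ, Computable f ∧ Function.Injective f ∧ ∀ n, n ∈ B ↔ f n ∈ A

/-- `B ≤_T A`: Turing reducibility. -/
def TuringRed (B A : Set ℕ) : Prop :=
  ∃ Φ : TuringFunctional, Φ.FunEq A B

/-- `B ≤_mr A`: mod-recursive reducibility. -/
def ModRecRed (B A : Set ℕ) : Prop :=
  ∃ Φ : TuringFunctional, Φ.FunEq A B ∧
    ∀ C : Set ℕ, ComputablePred (fun n => (n ∈ C ↔ n ∈ A)) →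
      Φ.TotalOn C ∧ ComputablePred (fun n => n ∈ Φ.AgreeSet C B)

/-- `B ≤_mf A`: mod-finite reducibility. -/
def ModFinRed (B A : Set ℕ) : Prop :=
  ∃ Φ : TuringFunctional, Φ.FunEq A B ∧
    ∀ C : Set ℕ, {n | ¬ (n ∈ C ↔ n ∈ A)}.Finite →
      Φ.TotalOn C ∧ (Φ.AgreeSet C B)ᶜ.Finite

/-- `B ≤_cor A`: coarse reducibility. -/
def CoarseRed (B A : Set ℕ) : Prop :=
  ∃ Φ : TuringFunctional,
    ∀ C : Set ℕ, DensityOne {n | n ∈ C ↔ n ∈ A} →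
      Φ.TotalOn C ∧ DensityOne (Φ.AgreeSet C B)

/-- `B ≤_cf A`: cofinite reducibility. -/
def CofinRed (B A : Set ℕ) : Prop :=
  ∃ Φ : TuringFunctional, Φ.FunEq A B ∧
    ∀ g : ℕ →. Bool, IsPartialOracle g A → (pDom g)ᶜ.Finite →
      Φ.PAgrees g B ∧ (Φ.PDomain g)ᶜ.Finite

/-- `B ≤_g A`: generic reducibility. -/
def GenericRed (B A : Set ℕ) : Prop :=
  ∃ Φ : TuringFunctional, Φ.FunEq A B ∧
    ∀ g : ℕ →. Bool, IsPartialOracle g A → DensityOne (pDom g) →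
      Φ.PAgrees g B ∧ DensityOne (Φ.PDomain g)

/-- `B ≤_ii A`: infinite-information reducibility. -/
def IIRed (B A : Set ℕ) : Prop :=
  ∃ Φ : TuringFunctional,
    ∀ g : ℕ →. Bool, IsPartialOracle g A → (pDom g).Infinite →
      Φ.PAgrees g B ∧ (Φ.PDomain g).Infinite

/-- `B ≤_ubfb A`: use-bounded-from-below reducibility. -/
def UbfbRed (B A : Set ℕ) : Prop :=
  ∃ Φ : TuringFunctional, Φ.FunEq A B ∧
    ∀ m : ℕ, ∀ᶠ n in Filter.atTop, ¬ Φ.QueriesAt A n m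

/-- `R(S) = {2^n · m : n ∈ S, m odd}`. -/
def Rmap (S : Set ℕ) : Set ℕ :=
  {x | ∃ n ∈ S, ∃ m : ℕ, Odd m ∧ x = 2 ^ n * m}

/-- `R̃(S) = {2^n + m : n ∈ S, m < 2^n}`. -/
def Rtilde (S : Set ℕ) : Set ℕ :=
  {x | ∃ n ∈ S, ∃ m : ℕ, m < 2 ^ n ∧ x = 2 ^ n + m}

/-- The Turing join `A ⊕ B`. -/
def turingJoin (A B : Set ℕ) : Set ℕ :=
  {x | (∃ n ∈ A, x = 2 * n) ∨ (∃ n ∈ B, x = 2 * n + 1)}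


/-! ### Auxiliary development -/

namespace MRCF

/-- Characteristic function of a set of naturals. -/
noncomputable def chi (A : Set ℕ) (i : ℕ) : Bool := @decide (i ∈ A) (Classical.propDecidable _)

theorem chi_iff (A : Set ℕ) (i : ℕ) : chi A i = true ↔ i ∈ A := by
  simp [chi]

theorem bool_eq_of_iff {a b : Bool} (h : a = true ↔ b = true) : a = b := by
  cases a <;> cases b <;> simp_all

/-- Parity of `f 0, …, f (n-1)`. -/
def par (f : ℕ → Bool) : ℕ → Bool
  | 0 => false
  | n+1 => xor (par f n) (f n)

theorem par_congr {f g : ℕ → Bool} : ∀ n, (∀ i, i < n → f i = g i) → par f n = par g n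
  | 0, _ => rfl
  | n+1, h => by
    simp only [par, par_congr n (fun i hi => h i (Nat.lt_succ_of_lt hi)),
      h n (Nat.lt_succ_self n)]

theorem par_shift (f : ℕ → Bool) : ∀ n, par f (n+1) = xor (f 0) (par (fun i => f (i+1)) n)
  | 0 => by simp [par]
  | n+1 => by
    have ih := par_shift f n
    simp only [par] at ih ⊢
    rw [ih, Bool.xor_assoc]

theorem par_update {f : ℕ → Bool} {m : ℕ} {c : Bool} :
    ∀ n, m < n → par (Function.update f m c) n = xor (par f n) (xor (f m) c)
  | 0, h => absurd h (Nat.not_lt_zero m)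
  | n+1, h => by
    rcases Nat.lt_succ_iff_lt_or_eq.1 h with h' | h'
    · have ih := par_update (f := f) (c := c) n h'
      simp only [par, ih, Function.update_of_ne (Nat.ne_of_gt h')]
      cases par f n <;> cases f n <;> cases f m <;> cases c <;> rfl
    · subst h'
      have hc : par (Function.update f m c) m = par f m :=
        par_congr m (fun i hi => Function.update_of_ne (Nat.ne_of_lt hi) _ _)
      simp only [par, hc, Function.update_self]
      cases par f m <;> cases f m <;> cases c <;> rfl

theorem par_xor (f g : ℕ → Bool) :
    ∀ n, par (fun i => xor (f i) (g i)) n = xor (par f n) (par g n)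
  | 0 => rfl
  | n+1 => by
    simp only [par, par_xor f g n]
    cases par f n <;> cases par g n <;> cases f n <;> cases g n <;> rfl

theorem par_eq_rec (f : ℕ → Bool) :
    ∀ n, par f n = Nat.rec (motive := fun _ => Bool) false (fun k ih => xor ih (f k)) n
  | 0 => rfl
  | n+1 => by simp only [par, par_eq_rec f n]

/-- Parity set: `n ∈ Bpar A` iff the number of elements of `A` below `n+1` is odd. -/
def Bpar (A : Set ℕ) : Set ℕ := {n | par (chi A) (n+1) = true}

theorem foldr_eq_par : ∀ w : List Bool,
    w.foldr xor false = par (fun i => w.getD i false) w.length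
  | [] => rfl
  | x :: w => by
    rw [List.foldr_cons, List.length_cons, par_shift, List.getD_cons_zero,
      foldr_eq_par w]
    exact congrArg (xor x) (par_congr _ fun i hi => by simp)

/-! ### The parity functional -/

def sigmaOf (w : List Bool) : FinInfo :=
  (List.range w.length).map fun i => (i, w.getD i false)

def mkAx (w : List Bool) : Option (FinInfo × ℕ × Bool) :=
  if w.length = 0 then none else some (sigmaOf w, w.length - 1, w.foldr xor false)

def axsPar : ℕ → Option (FinInfo × ℕ × Bool) := fun k =>
  (Encodable.decode (α := List Bool) k).bind mkAx

theorem sigmaOf_primrec : Primrec sigmaOf := by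
  have h1 : Primrec fun w : List Bool => List.range w.length :=
    Primrec.list_range.comp Primrec.list_length
  have h2 : Primrec₂ fun (w : List Bool) (i : ℕ) => (i, w.getD i false) :=
    Primrec.pair Primrec.snd ((Primrec.list_getD false).comp Primrec.fst Primrec.snd)
  exact Primrec.list_map h1 h2

theorem foldr_xor_primrec : Primrec fun w : List Bool => w.foldr xor false := by
  have h : Primrec₂ fun (_ : List Bool) (p : Bool × Bool) => xor p.1 p.2 :=
    (Primrec.dom_bool₂ xor).comp (Primrec.fst.comp Primrec.snd)
      (Primrec.snd.comp Primrec.snd)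
  exact Primrec.list_foldr Primrec.id (Primrec.const false) h

theorem mkAx_primrec : Primrec mkAx := by
  have hlen : Primrec fun w : List Bool => w.length := Primrec.list_length
  have hcond : PrimrecPred fun w : List Bool => w.length = 0 :=
    PrimrecPred.comp (p := fun n : ℕ => n = 0)
      (Primrec.eq.comp Primrec.id (Primrec.const 0)) hlen
  have hsome : Primrec fun w : List Bool =>
      (some (sigmaOf w, w.length - 1, w.foldr xor false) : Option (FinInfo × ℕ × Bool)) :=
    Primrec.option_some.comp (Primrec.pair sigmaOf_primrec
      (Primrec.pair (Primrec.pred.comp hlen) foldr_xor_primrec))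
  exact (Primrec.ite hcond (Primrec.const none) hsome).of_eq fun w => by simp [mkAx]

theorem axsPar_computable : Computable axsPar :=
  (Primrec.option_bind (Primrec.decode (α := List Bool))
    (mkAx_primrec.comp Primrec.snd).to₂).to_comp

theorem mkAx_eq_some {w : List Bool} {σ : FinInfo} {n : ℕ} {b : Bool}
    (h : mkAx w = some (σ, n, b)) :
    w.length = n + 1 ∧ σ = sigmaOf w ∧ b = w.foldr xor false := by
  unfold mkAx at h
  split at h
  · exact absurd h (by simp)
  · rename_i hlen
    simp only [Option.some.injEq, Prod.mk.injEq] at h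
    obtain ⟨h1, h2, h3⟩ := h
    exact ⟨by omega, h1.symm, h3.symm⟩

theorem mem_sigmaOf {w : List Bool} {p : ℕ × Bool} :
    p ∈ sigmaOf w ↔ ∃ i, i < w.length ∧ p = (i, w.getD i false) := by
  simp only [sigmaOf, List.mem_map, List.mem_range]
  constructor
  · rintro ⟨i, hi, rfl⟩; exact ⟨i, hi, rfl⟩
  · rintro ⟨i, hi, rfl⟩; exact ⟨i, hi, rfl⟩

theorem sigmaOf_ext {w₁ w₂ : List Bool} (hlen : w₁.length = w₂.length)
    (h : FinInfo.Compatible (sigmaOf w₁) (sigmaOf w₂)) : w₁ = w₂ := by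
  apply List.ext_getElem hlen
  intro i hi1 hi2
  have h1 : (i, w₁.getD i false) ∈ sigmaOf w₁ := mem_sigmaOf.2 ⟨i, hi1, rfl⟩
  have h2 : (i, w₂.getD i false) ∈ sigmaOf w₂ := mem_sigmaOf.2 ⟨i, hi2, rfl⟩
  have := h _ h1 _ h2 rfl
  simpa [List.getD_eq_getElem, hi1, hi2] using this

/-- The parity Turing functional. -/
def PhiPar : TuringFunctional where
  axs := axsPar
  axs_computable := axsPar_computable
  consistent := by
    intro k₁ k₂ σ₁ σ₂ n b₁ b₂ h₁ h₂ hcomp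
    obtain ⟨w₁, hw₁, hmk₁⟩ := Option.bind_eq_some_iff.1 h₁
    obtain ⟨w₂, hw₂, hmk₂⟩ := Option.bind_eq_some_iff.1 h₂
    obtain ⟨hl1, hs1, hb1⟩ := mkAx_eq_some hmk₁
    obtain ⟨hl2, hs2, hb2⟩ := mkAx_eq_some hmk₂
    have hww : w₁ = w₂ := sigmaOf_ext (hl1.trans hl2.symm) (hs1 ▸ hs2 ▸ hcomp)
    rw [hb1, hb2, hww]

noncomputable def bitsOf (C : Set ℕ) (n : ℕ) : List Bool := (List.range (n+1)).map (chi C)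

theorem bitsOf_length (C : Set ℕ) (n : ℕ) : (bitsOf C n).length = n + 1 := by
  simp [bitsOf]

theorem bitsOf_getD (C : Set ℕ) (n i : ℕ) (h : i < n + 1) :
    (bitsOf C n).getD i false = chi C i := by
  have h' : i < (bitsOf C n).length := by rw [bitsOf_length]; exact h
  rw [List.getD_eq_getElem _ _ h']
  simp [bitsOf]

theorem agreesSet_sigmaOf {w : List Bool} {C : Set ℕ} :
    AgreesSet (sigmaOf w) C ↔ ∀ i, i < w.length → (w.getD i false = chi C i) := by
  constructor
  · intro h i hi
    have := h _ (mem_sigmaOf.2 ⟨i, hi, rfl⟩)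
    exact bool_eq_of_iff (this.trans (chi_iff C i).symm)
  · intro h p hp
    obtain ⟨i, hi, rfl⟩ := mem_sigmaOf.1 hp
    rw [h i hi]
    exact chi_iff C i

theorem haltsT_phiPar (C : Set ℕ) (n : ℕ) (b : Bool) :
    PhiPar.HaltsT C n b ↔ b = par (chi C) (n+1) := by
  constructor
  · rintro ⟨k, σ, hax, hag⟩
    obtain ⟨w, hw, hmk⟩ := Option.bind_eq_some_iff.1 hax
    obtain ⟨hl, hs, hb⟩ := mkAx_eq_some hmk
    have hg := (agreesSet_sigmaOf (w := w) (C := C)).1 (hs ▸ hag)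
    rw [hb, foldr_eq_par, hl]
    exact par_congr (n+1) fun i hi => hg i (hl ▸ hi)
  · rintro rfl
    refine ⟨Encodable.encode (bitsOf C n), sigmaOf (bitsOf C n), ?_, ?_⟩
    · have hb : (bitsOf C n).foldr xor false = par (chi C) (n+1) := by
        rw [foldr_eq_par, bitsOf_length]
        exact par_congr _ (fun i hi => bitsOf_getD C n i hi)
      show (Encodable.decode (α := List Bool) _).bind mkAx = _
      rw [Encodable.encodek, Option.bind_some]
      unfold mkAx
      rw [if_neg (by rw [bitsOf_length]; omega), hb, bitsOf_length]
      rw [Nat.add_sub_cancel]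
    · exact agreesSet_sigmaOf.2 fun i hi => bitsOf_getD C n i (by
        rwa [bitsOf_length] at hi)

theorem phiPar_total (C : Set ℕ) : PhiPar.TotalOn C :=
  fun n => ⟨par (chi C) (n+1), (haltsT_phiPar C n _).2 rfl⟩

theorem phiPar_funEq (A : Set ℕ) : PhiPar.FunEq A (Bpar A) := by
  refine ⟨phiPar_total A, fun n b h => ?_⟩
  rw [(haltsT_phiPar A n b).1 h]
  exact Iff.rfl

/-! ### mod-recursive reducibility of `Bpar A` to `A` -/

theorem mem_agreeSet_phiPar {C B : Set ℕ} {n : ℕ} :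
    n ∈ PhiPar.AgreeSet C B ↔ (par (chi C) (n+1) = true ↔ n ∈ B) := by
  constructor
  · rintro ⟨b, hb, hiff⟩
    rwa [(haltsT_phiPar C n b).1 hb] at hiff
  · intro h
    exact ⟨par (chi C) (n+1), (haltsT_phiPar C n _).2 rfl, h⟩

theorem modRec (A : Set ℕ) : ModRecRed (Bpar A) A := by
  refine ⟨PhiPar, phiPar_funEq A, fun C hC => ⟨phiPar_total C, ?_⟩⟩
  obtain ⟨f, hf, hpeq⟩ := ComputablePred.computable_iff.1 hC
  have key : ∀ i, xor (chi C i) (chi A i) = !(f i) := by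
    intro i
    have h1 : (i ∈ C ↔ i ∈ A) = (f i = true) := congrFun hpeq i
    have h2 : (chi C i = true ↔ chi A i = true) ↔ (f i = true) := by
      rw [chi_iff, chi_iff]; exact iff_of_eq h1
    cases hfc : f i <;> cases hc : chi C i <;> cases ha : chi A i <;>
      simp_all
  have hsetiff : ∀ n, n ∈ PhiPar.AgreeSet C (Bpar A) ↔
      ((!(par (fun i => !(f i)) (n+1))) = true) := by
    intro n
    rw [mem_agreeSet_phiPar]
    have hmem : (n ∈ Bpar A) = (par (chi A) (n+1) = true) := rfl
    have hx : par (fun i => !(f i)) (n+1) = xor (par (chi C) (n+1)) (par (chi A) (n+1)) := by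
      rw [← par_xor]
      exact par_congr (n+1) fun i _ => (key i).symm
    rw [hmem]
    cases h1 : par (chi C) (n+1) <;> cases h2 : par (chi A) (n+1) <;>
      simp_all
  have hcomp : Computable fun n => !(par (fun i => !(f i)) (n+1)) := by
    have hnotf : Computable fun i => !(f i) := (Primrec.not.to_comp).comp hf
    have hstep : Computable₂ fun (_ : ℕ) (p : ℕ × Bool) => xor p.2 (!(f p.1)) := by
      have : Computable fun q : ℕ × (ℕ × Bool) => xor q.2.2 (!(f q.2.1)) :=
        ((Primrec.dom_bool₂ xor).to_comp).comp
          (Computable.snd.comp Computable.snd)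
          (hnotf.comp (Computable.fst.comp Computable.snd))
      exact this.to₂
    have hrec : Computable fun n : ℕ => Nat.rec (motive := fun _ => Bool) false
        (fun k ih => xor ih (!(f k))) n := by
      have := Computable.nat_rec (f := fun n : ℕ => n) (g := fun _ : ℕ => false)
        (h := fun (_ : ℕ) (p : ℕ × Bool) => xor p.2 (!(f p.1)))
        Computable.id (Computable.const false) hstep
      exact this
    have hparf : Computable fun n : ℕ => par (fun i => !(f i)) (n+1) := by
      have hsucc : Computable Nat.succ := Computable.succ
      have := hrec.comp hsucc
      exact Computable.of_eq this fun n => (par_eq_rec (fun i => !(f i)) (n+1)).symm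
    exact (Primrec.not.to_comp).comp hparf
  exact ComputablePred.computable_iff.2
    ⟨fun n => !(par (fun i => !(f i)) (n+1)), hcomp,
      funext fun n => propext (hsetiff n)⟩

/-! ### The killing lemma for cofinite reducibility -/

def CfWitness (Φ : TuringFunctional) (A B : Set ℕ) : Prop :=
  Φ.FunEq A B ∧ ∀ g : ℕ →. Bool, IsPartialOracle g A → (pDom g)ᶜ.Finite →
    Φ.PAgrees g B ∧ (Φ.PDomain g)ᶜ.Finite

def Extends (A : Set ℕ) (τ : List Bool) : Prop :=
  ∀ i, i < τ.length → (i ∈ A ↔ τ.getD i false = true)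

def Pax (a : ℕ → Option (FinInfo × ℕ × Bool)) (τ : List Bool) (n : ℕ) : Prop :=
  ∃ k σ b, a k = some (σ, n, b) ∧ (∀ p ∈ σ, p.1 ≠ τ.length) ∧
    (∀ p ∈ σ, p.1 < τ.length → p.2 = τ.getD p.1 false) ∧ FinInfo.Compatible σ σ

theorem mem_lt_posBound : ∀ (σ : FinInfo), ∀ p ∈ σ,
    p.1 < σ.foldr (fun q r => max (q.1+1) r) 0
  | [], p, h => absurd h (List.not_mem_nil)
  | q :: σ, p, h => by
    rw [List.foldr_cons]
    rcases List.mem_cons.1 h with rfl | h'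
    · exact lt_of_lt_of_le (Nat.lt_succ_self _) (le_max_left _ _)
    · exact lt_of_lt_of_le (mem_lt_posBound σ p h') (le_max_right _ _)

theorem kill (a : ℕ → Option (FinInfo × ℕ × Bool)) (τ : List Bool) :
    ∃ τ' : List Bool, τ <+: τ' ∧ ∀ A : Set ℕ, Extends A τ' →
      ∀ Φ : TuringFunctional, Φ.axs = a → ¬ CfWitness Φ A (Bpar A) := by
  classical
  set m := τ.length with hm
  by_cases hinf : {n | ¬ Pax a τ n}.Infinite
  · -- Case A: no extension needed
    refine ⟨τ, List.prefix_refl τ, fun A hA Φ haxs hcf => ?_⟩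
    obtain ⟨h1, h2⟩ := hcf
    set g : ℕ →. Bool := fun i => if i = m then Part.none else Part.some (chi A i) with hg
    have hpo : IsPartialOracle g A := by
      intro i b hb
      by_cases hi : i = m
      · rw [hg] at hb; simp only [hi, if_pos rfl] at hb
        exact absurd hb (Part.notMem_none b)
      · rw [hg] at hb; simp only [if_neg hi] at hb
        rw [Part.mem_some_iff] at hb
        subst hb
        exact chi_iff A i
    have hdom : (pDom g)ᶜ.Finite := by
      apply Set.Finite.subset (Set.finite_singleton m)
      intro i hi
      simp only [Set.mem_compl_iff, pDom, Set.mem_setOf_eq] at hi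
      by_contra hne
      rw [Set.mem_singleton_iff] at hne
      apply hi
      rw [hg]
      simp only [if_neg hne]
      trivial
    obtain ⟨-, hfin⟩ := h2 g hpo hdom
    apply hinf
    apply hfin.subset
    intro n hn
    simp only [Set.mem_setOf_eq] at hn
    simp only [Set.mem_compl_iff, TuringFunctional.PDomain, Set.mem_setOf_eq]
    rintro ⟨b, k, σ, haxk, hagr⟩
    apply hn
    have hvals : ∀ p ∈ σ, p.1 ≠ m ∧ p.2 = chi A p.1 := by
      intro p hp
      have hmem := hagr p hp
      by_cases hpm : p.1 = m
      · rw [hg] at hmem; simp only [hpm, if_pos rfl] at hmem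
        exact absurd hmem (Part.notMem_none _)
      · rw [hg] at hmem; simp only [if_neg hpm] at hmem
        exact ⟨hpm, Part.mem_some_iff.1 hmem⟩
    refine ⟨k, σ, b, by rw [← haxs]; exact haxk, fun p hp => (hvals p hp).1, ?_, ?_⟩
    · intro p hp hlt
      rw [(hvals p hp).2]
      exact bool_eq_of_iff ((chi_iff A p.1).trans (hA p.1 hlt))
    · intro p hp q hq hpq
      rw [(hvals p hp).2, (hvals q hq).2, hpq]
  · -- Case B: force a wrong answer
    rw [Set.not_infinite] at hinf
    obtain ⟨B0, hB0⟩ := hinf.bddAbove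
    set n := max m (B0 + 1) with hn
    have hPn : Pax a τ n := by
      by_contra hnp
      have : n ≤ B0 := hB0 hnp
      omega
    have hmn : m ≤ n := le_max_left _ _
    obtain ⟨k, σ, b₀, haxk, hnm, hτc, hcomp⟩ := hPn
    set M := σ.foldr (fun q r => max (q.1+1) r) 0 with hM
    set N := max (n+1) M with hN
    have hnN : n + 1 ≤ N := le_max_left _ _
    have hmN : m < N := lt_of_le_of_lt hmn (lt_of_lt_of_le (Nat.lt_succ_self n) hnN)
    set val₀ : ℕ → Bool := fun i =>
      if h : ∃ p, p ∈ σ ∧ p.1 = i then (Classical.choose h).2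
      else if i < m then τ.getD i false else false with hval₀
    have hval₀m : val₀ m = false := by
      have hns : ¬ ∃ p, p ∈ σ ∧ p.1 = m := by
        rintro ⟨p, hp, hpm⟩; exact hnm p hp hpm
      simp only [hval₀]
      rw [dif_neg hns, if_neg (lt_irrefl m)]
    set c : Bool := xor (par val₀ (n+1)) (!b₀) with hc
    set val : ℕ → Bool := Function.update val₀ m c with hval
    have hvval₀ : ∀ i, i ≠ m → val i = val₀ i := fun i hi => by
      rw [hval]; exact Function.update_of_ne hi _ _
    have hσval : ∀ p ∈ σ, val p.1 = p.2 := by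
      intro p hp
      rw [hvval₀ p.1 (hnm p hp)]
      simp only [hval₀]
      have hex : ∃ q, q ∈ σ ∧ q.1 = p.1 := ⟨p, hp, rfl⟩
      rw [dif_pos hex]
      obtain ⟨hq1, hq2⟩ := Classical.choose_spec hex
      exact (hcomp p hp _ hq1 hq2.symm).symm
    have hvallow : ∀ i, i < m → val i = τ.getD i false := by
      intro i hi
      rw [hvval₀ i (Nat.ne_of_lt hi)]
      simp only [hval₀]
      by_cases hex : ∃ p, p ∈ σ ∧ p.1 = i
      · rw [dif_pos hex]
        obtain ⟨hq1, hq2⟩ := Classical.choose_spec hex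
        rw [← hq2] at hi
        exact (hτc _ hq1 hi).trans (by rw [hq2])
      · rw [dif_neg hex, if_pos hi]
    set τ' : List Bool := (List.range N).map val with hτ'
    have hτ'len : τ'.length = N := by simp [hτ']
    have hτ'getD : ∀ i, i < N → τ'.getD i false = val i := by
      intro i hi
      have hi' : i < τ'.length := by rw [hτ'len]; exact hi
      rw [List.getD_eq_getElem _ _ hi']
      simp [hτ']
    refine ⟨τ', ?_, ?_⟩
    · -- τ is a prefix of τ'
      have htake : τ'.take m = τ := by
        apply List.ext_getElem
        · simp [hτ'len]; omega
        · intro i hi1 hi2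
          have him : i < m := by
            simp [hτ'len] at hi1; omega
          rw [List.getElem_take]
          have hiN : i < N := lt_trans him hmN
          have : τ'[i] = val i := by
            rw [← hτ'getD i hiN, List.getD_eq_getElem]
          rw [this, hvallow i him, List.getD_eq_getElem _ _ hi2]
      rw [← htake]
      exact List.take_prefix m τ'
    · intro A hA Φ haxs hcf
      obtain ⟨h1, h2⟩ := hcf
      have hchiA : ∀ i, i < N → chi A i = val i := by
        intro i hi
        apply bool_eq_of_iff
        rw [chi_iff]
        rw [← hτ'getD i hi]
        exact hA i (by rw [hτ'len]; exact hi)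
      have hhalts : Φ.HaltsT A n b₀ := by
        refine ⟨k, σ, by rw [haxs]; exact haxk, ?_⟩
        intro p hp
        have hpN : p.1 < N := lt_of_lt_of_le (hM ▸ mem_lt_posBound σ p hp) (le_max_right _ _)
        rw [← hσval p hp, ← hchiA p.1 hpN]
        exact chi_iff A p.1
      have hcorrect := h1.2 n b₀ hhalts
      have hparA : par (chi A) (n+1) = !b₀ := by
        have h1' : par (chi A) (n+1) = par val (n+1) :=
          par_congr (n+1) fun i hi => hchiA i (lt_of_lt_of_le hi hnN)
        have h2' : par val (n+1) = xor (par val₀ (n+1)) (xor (val₀ m) c) := by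
          rw [hval]
          exact par_update (n+1) (Nat.lt_succ_of_le hmn)
        rw [h1', h2', hval₀m, hc]
        cases par val₀ (n+1) <;> cases b₀ <;> rfl
      have hBn : (n ∈ Bpar A) = (par (chi A) (n+1) = true) := rfl
      rw [hBn, hparA] at hcorrect
      cases b₀ <;> simp_all

/-! ### Diagonalization -/

theorem countable_computable :
    {a : ℕ → Option (FinInfo × ℕ × Bool) | Computable a}.Countable := by
  rw [← Set.countable_coe_iff]
  apply Function.Injective.countable
    (f := fun a : {a : ℕ → Option (FinInfo × ℕ × Bool) | Computable a} =>
      (⟨fun n => Encodable.encode (a.1 n), Computable.encode.comp a.2⟩ :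
        {f : ℕ → ℕ // Computable f}))
  intro x y h
  apply Subtype.ext
  funext n
  have := congrFun (congrArg Subtype.val h) n
  exact Encodable.encode_injective this

theorem getD_of_prefix {l₁ l₂ : List Bool} (h : l₁ <+: l₂) {i : ℕ} (hi : i < l₁.length) :
    l₂.getD i false = l₁.getD i false := by
  obtain ⟨t, rfl⟩ := h
  have hi2 : i < (l₁ ++ t).length := by
    rw [List.length_append]; omega
  rw [List.getD_eq_getElem _ _ hi, List.getD_eq_getElem _ _ hi2]
  exact List.getElem_append_left hi

end MRCF

open MRCF in
theorem exists_mod_recursive_red_not_cofinite_red :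
    ∃ A B : Set ℕ, ModRecRed B A ∧ ¬ CofinRed B A := by
  classical
  have hne : {a : ℕ → Option (FinInfo × ℕ × Bool) | Computable a}.Nonempty :=
    ⟨fun _ => none, Computable.const none⟩
  obtain ⟨e, he⟩ := Set.Countable.exists_eq_range countable_computable hne
  let T : ℕ → List Bool := fun k =>
    Nat.rec [] (fun k ih => Classical.choose (kill (e k) ih)) k
  have hTsucc : ∀ k, T (k+1) = Classical.choose (kill (e k) (T k)) := fun k => rfl
  have hT : ∀ k, T k <+: T (k+1) ∧ ∀ A : Set ℕ, Extends A (T (k+1)) →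
      ∀ Φ : TuringFunctional, Φ.axs = e k → ¬ CfWitness Φ A (Bpar A) := by
    intro k
    rw [hTsucc k]
    exact Classical.choose_spec (kill (e k) (T k))
  have hmono : ∀ j k, j ≤ k → T j <+: T k := by
    intro j k h
    induction h with
    | refl => exact List.prefix_refl _
    | step _ ih => exact ih.trans (hT _).1
  set A : Set ℕ := {i | ∃ k, i < (T k).length ∧ (T k).getD i false = true} with hA
  have hext : ∀ k, Extends A (T k) := by
    intro k i hi
    constructor
    · rintro ⟨j, hj, hbit⟩
      rcases le_total j k with h | h
      · rw [getD_of_prefix (hmono j k h) hj]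
        exact hbit
      · rw [← getD_of_prefix (hmono k j h) hi]
        exact hbit
    · intro hbit
      exact ⟨k, hi, hbit⟩
  refine ⟨A, Bpar A, modRec A, ?_⟩
  rintro ⟨Φ, h1, h2⟩
  have hmem : Φ.axs ∈ {a : ℕ → Option (FinInfo × ℕ × Bool) | Computable a} :=
    Φ.axs_computable
  rw [he] at hmem
  obtain ⟨k, hk⟩ := hmem
  exact (hT k).2 A (hext (k+1)) Φ hk.symm ⟨h1, h2⟩
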